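/- Let L_n(a,b) be the Lucas polynomials (L_0 = 2, L_1 = a, L_{n+2} = a·L_{n+1} - b·L_n). Then for every m ≥ 0, the polynomial x^2 - a·x + b divides x^(2m+2) - L_{m+1}(a,b)·x^(m+1) + b^(m+1) in ℤ[a,b][x]. -/
import Mathlib


open Polynomial MvPolynomial

noncomputable def a : MvPolynomial (Fin 2) ℤ := MvPolynomial.X 0
noncomputable def b : MvPolynomial (Fin 2) ℤ := MvPolynomial.X 1

noncomputable def L : ℕ → MvPolynomial (Fin 2) ℤ
  | 0 => 2
  | 1 => a
  | (n+2) => a * L (n+1) - b * L n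

theorem stmt_9 (m : ℕ) :
    (Polynomial.X^2 - Polynomial.C a * Polynomial.X + Polynomial.C b
        : Polynomial (MvPolynomial (Fin 2) ℤ))
      ∣ Polynomial.X^(2*m+2) - Polynomial.C (L (m+1)) * Polynomial.X^(m+1)
          + Polynomial.C (b^(m+1)) := by
  set D : Polynomial (MvPolynomial (Fin 2) ℤ) :=
    Polynomial.X^2 - Polynomial.C a * Polynomial.X + Polynomial.C b with hD
  suffices h : ∀ n : ℕ,
      (D ∣ Polynomial.X^(2*n+2) - Polynomial.C (L (n+1)) * Polynomial.X^(n+1)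
          + Polynomial.C (b^(n+1))) ∧
      (D ∣ Polynomial.X^(2*(n+1)+2) - Polynomial.C (L (n+2)) * Polynomial.X^(n+2)
          + Polynomial.C (b^(n+2))) from (h m).1
  intro n
  induction n with
  | zero =>
    constructor
    · exact ⟨1, by simp only [L, hD, map_pow, map_mul, map_sub, map_ofNat]; ring⟩
    · refine ⟨Polynomial.X^2 + Polynomial.C a * Polynomial.X + Polynomial.C b, ?_⟩
      simp only [L, hD, map_pow, map_mul, map_sub, map_ofNat]
      ring
  | succ n ih =>
    obtain ⟨h1, h2⟩ := ih
    refine ⟨h2, ?_⟩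
    have key : D ∣ Polynomial.C a * Polynomial.X *
          (Polynomial.X^(2*(n+1)+2) - Polynomial.C (L (n+2)) * Polynomial.X^(n+2)
            + Polynomial.C (b^(n+2)))
        - Polynomial.C b * Polynomial.X^2 *
          (Polynomial.X^(2*n+2) - Polynomial.C (L (n+1)) * Polynomial.X^(n+1)
            + Polynomial.C (b^(n+1)))
        + (Polynomial.X^(2*n+4) + Polynomial.C (b^(n+2))) * D :=
      dvd_add (dvd_sub (h2.mul_left _) (h1.mul_left _)) (Dvd.intro_left _ rfl)
    have eq1 : Polynomial.X^(2*(n+1+1)+2)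
          - Polynomial.C (L (n+1+2)) * Polynomial.X^(n+1+2)
          + Polynomial.C (b^(n+1+2))
        = Polynomial.C a * Polynomial.X *
          (Polynomial.X^(2*(n+1)+2) - Polynomial.C (L (n+2)) * Polynomial.X^(n+2)
            + Polynomial.C (b^(n+2)))
        - Polynomial.C b * Polynomial.X^2 *
          (Polynomial.X^(2*n+2) - Polynomial.C (L (n+1)) * Polynomial.X^(n+1)
            + Polynomial.C (b^(n+1)))
        + (Polynomial.X^(2*n+4) + Polynomial.C (b^(n+2))) * D := by
      have hL : L (n+1+2) = a * L (n+2) - b * L (n+1) := rfl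
      simp only [hL, hD, map_pow, map_mul, map_sub]
      ring
    rw [eq1]
    exact key
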